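/- If A ≡≡ B and Var(C) ⊆ Var(A) ∩ Var(B), then A ∪ C ≡≡ B ∪ C. -/

import Mathlib

/-- A literal is a variable with a polarity (`true` = positive). A clause is a
finite set of literals. -/
abbrev Clause (V : Type) := Finset (V × Bool)

/-- A formula is a (finite) set of clauses, read as a conjunction of disjunctions. -/
abbrev Formula (V : Type) := Finset (Clause V)

variable {V : Type} [DecidableEq V]

/-- An assignment satisfies a clause if it makes some literal of it true. -/
def clauseSat (a : V → Bool) (c : Clause V) : Prop := ∃ l ∈ c, a l.1 = l.2

/-- An assignment satisfies a formula if it satisfies all its clauses. -/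
def satF (a : V → Bool) (F : Formula V) : Prop := ∀ c ∈ F, clauseSat a c

/-- Entailment: every model of `A` is a model of `B`. -/
def entails (A B : Formula V) : Prop := ∀ a : V → Bool, satF a A → satF a B

/-- Satisfiability. -/
def satisfiable (F : Formula V) : Prop := ∃ a : V → Bool, satF a F

/-- The set of variables occurring (positively or negatively) in a formula. -/
def vars (F : Formula V) : Set V := {v | ∃ c ∈ F, ∃ b : Bool, (v, b) ∈ c}

/-- Common equivalence: same consequences on the common variables. -/
def commonEquiv (A B : Formula V) : Prop :=
  ∀ C : Formula V, vars C ⊆ vars A ∩ vars B → (entails A C ↔ entails B C)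

/-- An assignment satisfies a set of literals (viewed as unit clauses). -/
def satLits (a : V → Bool) (S : Set (V × Bool)) : Prop := ∀ l ∈ S, a l.1 = l.2

/-- A clause is Horn if it has at most one positive literal. -/
def hornClause (c : Clause V) : Prop := (c.filter (fun l => l.2 = true)).card ≤ 1

/-- A formula is Horn if all its clauses are. -/
def hornFormula (F : Formula V) : Prop := ∀ c ∈ F, hornClause c

/-- A clause is definite Horn if it has exactly one positive literal. -/
def definiteClause (c : Clause V) : Prop := (c.filter (fun l => l.2 = true)).card = 1

/-- A formula is definite Horn if all its clauses are. -/
def definiteHorn (F : Formula V) : Prop := ∀ c ∈ F, definiteClause c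

/-- The size of a formula: total number of literal occurrences. -/
def fsize (F : Formula V) : ℕ := ∑ c ∈ F, c.card

/-- The set of variables `P` as a set of positive unit clauses. -/
def unitsOf (P : Finset V) : Formula V := P.image (fun p => ({(p, true)} : Clause V))

/-- The definite Horn clause `P → x`. -/
def dClause (P : Finset V) (x : V) : Clause V :=
  P.image (fun p => ((p, false) : V × Bool)) ∪ {(x, true)}

/-- `F ⊨ P`: the formula entails every variable of `P`. -/
def entailsV (F : Formula V) (P : Finset V) : Prop := entails F (unitsOf P)

/-- A definite Horn formula is single-head if no two distinct clauses share a head. -/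
def singleHead (F : Formula V) : Prop :=
  ∀ (P P' : Finset V) (x : V), x ∉ P → x ∉ P' →
    dClause P x ∈ F → dClause P' x ∈ F → P = P'

/-- The body of a clause: its negated variables. -/
def body (c : Clause V) : Finset V := (c.filter (fun l => l.2 = false)).image Prod.fst

/-- `F^x`: the clauses of `F` containing neither `x` nor `¬x`. -/
def restr (F : Formula V) (x : V) : Formula V :=
  F.filter (fun c => ((x, true) : V × Bool) ∉ c ∧ ((x, false) : V × Bool) ∉ c)

/-- `F[⊥/x]`: delete the clauses containing `¬x`, remove the literal `x` elsewhere. -/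
def substFalse (F : Formula V) (x : V) : Formula V :=
  (F.filter (fun c => ((x, false) : V × Bool) ∉ c)).image (fun c => c.erase (x, true))

/-- `newvar P x F`: summarize the body part `P` by the new variable `x`. -/
def newvar (P : Finset V) (x : V) (F : Formula V) : Formula V :=
  ((F.filter (fun c => ∀ p ∈ P, ((p, false) : V × Bool) ∈ c)).image
      (fun c => (c \ P.image (fun p => ((p, false) : V × Bool))) ∪ {((x, false) : V × Bool)}))
    ∪ (F.filter (fun c => ¬ ∀ p ∈ P, ((p, false) : V × Bool) ∈ c))
    ∪ {dClause P x}


lemma vars_union' (A C : Formula V) : vars (A ∪ C) = vars A ∪ vars C := by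
  ext v
  constructor
  · rintro ⟨c, hc, b, hb⟩
    rcases Finset.mem_union.mp hc with hc | hc
    · exact Or.inl ⟨c, hc, b, hb⟩
    · exact Or.inr ⟨c, hc, b, hb⟩
  · rintro (⟨c, hc, b, hb⟩ | ⟨c, hc, b, hb⟩)
    · exact ⟨c, Finset.mem_union_left _ hc, b, hb⟩
    · exact ⟨c, Finset.mem_union_right _ hc, b, hb⟩

lemma commonEquiv_union_aux (A B C D : Formula V) (h : commonEquiv A B)
    (hC : vars C ⊆ vars A ∩ vars B) (hD : vars D ⊆ vars A ∩ vars B)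
    (hAC : entails (A ∪ C) D) : entails (B ∪ C) D := by
  intro a ha d hd
  by_contra hnd
  set W : Finset V := C.sup (fun c => c.image Prod.fst) ∪ d.image Prod.fst with hW
  have hWsub : (↑W : Set V) ⊆ vars A ∩ vars B := by
    intro v hv
    simp only [hW, Finset.coe_union, Set.mem_union, Finset.mem_coe,
      Finset.mem_sup, Finset.mem_image] at hv
    rcases hv with ⟨c, hc, l, hl, hlv⟩ | ⟨l, hl, hlv⟩
    · exact hC ⟨c, hc, l.2, by rw [← hlv]; exact hl⟩
    · exact hD ⟨d, hd, l.2, by rw [← hlv]; exact hl⟩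
  set k : Clause V := W.image (fun v => (v, !a v)) with hk
  have hBk : ¬ entails B {k} := by
    intro he
    have hsatB : satF a B := fun c hc => ha c (Finset.mem_union_left _ hc)
    obtain ⟨l, hl, heq⟩ := he a hsatB k (Finset.mem_singleton_self k)
    simp only [hk, Finset.mem_image] at hl
    obtain ⟨v, _, rfl⟩ := hl
    simp at heq
  have hvarsk : vars ({k} : Formula V) ⊆ vars A ∩ vars B := by
    intro v hv
    obtain ⟨c, hc, b, hb⟩ := hv
    rw [Finset.mem_singleton] at hc; subst hc
    simp only [hk, Finset.mem_image] at hb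
    obtain ⟨w, hw, hwe⟩ := hb
    have : w = v := congrArg Prod.fst hwe
    exact hWsub (this ▸ hw)
  have hAk : ¬ entails A {k} := fun he => hBk ((h {k} hvarsk).mp he)
  rw [entails] at hAk
  push_neg at hAk
  obtain ⟨a', ha'A, ha'k⟩ := hAk
  rw [satF] at ha'k
  push_neg at ha'k
  obtain ⟨c, hc, hcsat⟩ := ha'k
  rw [Finset.mem_singleton] at hc; subst hc
  have hagree : ∀ v ∈ W, a' v = a v := by
    intro v hv
    by_contra hne
    exact hcsat ⟨(v, !a v), Finset.mem_image_of_mem _ hv, by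
      cases hav : a v <;> cases hav' : a' v <;> simp_all⟩
  have ha'C : satF a' C := by
    intro c hc
    obtain ⟨l, hl, he⟩ := ha c (Finset.mem_union_right _ hc)
    refine ⟨l, hl, ?_⟩
    rw [hagree l.1 (Finset.mem_union_left _ ((Finset.le_sup (f := fun (c : Clause V) => c.image Prod.fst) hc : c.image Prod.fst ⊆ C.sup (fun (c : Clause V) => c.image Prod.fst)) (Finset.mem_image_of_mem _ hl)))]
    exact he
  have ha'AC : satF a' (A ∪ C) := by
    intro c hc
    rcases Finset.mem_union.mp hc with hc | hc
    · exact ha'A c hc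
    · exact ha'C c hc
  obtain ⟨l, hl, he⟩ := hAC a' ha'AC d hd
  exact hnd ⟨l, hl, by
    rw [← hagree l.1 (Finset.mem_union_right _ (Finset.mem_image_of_mem _ hl))]; exact he⟩

omit [DecidableEq V] in
lemma commonEquiv_symm {A B : Formula V} (h : commonEquiv A B) : commonEquiv B A :=
  fun C hC => (h C (by rwa [Set.inter_comm])).symm

/-- monotonicity of common equivalence under conjunction with a
formula on the shared variables. -/
theorem commonEquiv_union (A B C : Formula V)
    (h : commonEquiv A B) (hC : vars C ⊆ vars A ∩ vars B) :
    commonEquiv (A ∪ C) (B ∪ C) := by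
  have hA : vars (A ∪ C) = vars A := by
    rw [vars_union']; exact Set.union_eq_self_of_subset_right (hC.trans Set.inter_subset_left)
  have hB : vars (B ∪ C) = vars B := by
    rw [vars_union']; exact Set.union_eq_self_of_subset_right (hC.trans Set.inter_subset_right)
  intro D hD
  rw [hA, hB] at hD
  constructor
  · exact commonEquiv_union_aux A B C D h hC hD
  · exact commonEquiv_union_aux B A C D (commonEquiv_symm h) (by rwa [Set.inter_comm])
      (by rwa [Set.inter_comm])
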